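/- Let S be a set of pmfs such that q = ⋀S exists. Then for any pmf q̃ satisfying q̃ ⪯ p for every p ∈ S, we have q̃ ⪯ q; i.e., ⋀S is the greatest lower bound of S with respect to majorization. -/

import Mathlib

open scoped ENNReal Classical
open Filter

namespace MEC

/-- A probability mass function on `α`: (nonnegative) masses summing to `1`. -/
def IsPMF {α : Type*} (p : α → ℝ≥0∞) : Prop := ∑' x, p x = 1

/-- `p` is an aggregation of `q`, written `q ⊑ p`: there is a map `g` sending the support of
`q` into the support of `p` such that `p` is the pushforward of `q` under `g`. -/
def Agg {α β : Type*} (q : α → ℝ≥0∞) (p : β → ℝ≥0∞) : Prop :=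
  ∃ g : α → β, (∀ x, q x ≠ 0 → p (g x) ≠ 0) ∧
    ∀ y, p y = ∑' x, if g x = y then q x else 0

/-- Sum of the `k` largest masses of `p`, i.e. `max_{A, |A| ≤ k} p(A)`. -/
noncomputable def topk {α : Type*} (p : α → ℝ≥0∞) (k : ℕ) : ℝ≥0∞ :=
  ⨆ (A : Finset α) (_ : A.card ≤ k), ∑ x ∈ A, p x

/-- `q` is majorized by `p`, written `q ⪯ p`: for every `k`, the sum of the `k` largest
masses of `q` is at most the sum of the `k` largest masses of `p`. -/
def Majorized {α β : Type*} (q : α → ℝ≥0∞) (p : β → ℝ≥0∞) : Prop :=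
  ∀ k : ℕ, topk q k ≤ topk p k

/-- Product pmf `(q × r)(x,z) = q(x) · r(z)`. -/
noncomputable def prodFun {α β : Type*} (q : α → ℝ≥0∞) (r : β → ℝ≥0∞) : α × β → ℝ≥0∞ :=
  fun z => q z.1 * r z.2

/-- `Geom_{1/2}` on `ℕ+ = {1,2,3,...}`, with mass `2^{-x}` at `x`. -/
noncomputable def geomHalf : ℕ+ → ℝ≥0∞ := fun x => 2⁻¹ ^ (x : ℕ)

/-- Capped geometric distribution `CGeom_{1/2,k}` on `{1,...,k} ⊆ ℕ+`. -/
noncomputable def cgeomHalf (k : ℕ) : ℕ+ → ℝ≥0∞ := fun x =>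
  if (x : ℕ) < k then 2⁻¹ ^ (x : ℕ) else if (x : ℕ) = k then 2⁻¹ ^ (k - 1) else 0

/-- `inf_{p ∈ S} max_{A ⊆ supp(p), |A| ≤ k} p(A)`. -/
noncomputable def infTopk {α : Type*} (S : Set (α → ℝ≥0∞)) (k : ℕ) : ℝ≥0∞ :=
  ⨅ p ∈ S, topk p k

/-- The greatest lower bound `⋀S` of `S` with respect to majorization, as a pmf on
`ℕ+ = {1,2,...}`, with `(⋀S)(k) = inf_{p∈S} max_{|A|≤k} p(A) − inf_{p∈S} max_{|A|≤k−1} p(A)`. -/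
noncomputable def glb {α : Type*} (S : Set (α → ℝ≥0∞)) : ℕ+ → ℝ≥0∞ :=
  fun k => infTopk S (k : ℕ) - infTopk S ((k : ℕ) - 1)

/-- Condition for the existence of `⋀S`:
`lim_{k→∞} inf_{p∈S} max_{A⊆supp(p), |A|≤k} p(A) = 1`. -/
def GlbExists {α : Type*} (S : Set (α → ℝ≥0∞)) : Prop :=
  Tendsto (fun k => infTopk S k) atTop (nhds 1)

/-- Base-2 logarithm on `ℝ≥0∞` (intended for arguments in `[1,∞]`). -/
noncomputable def log2 (x : ℝ≥0∞) : ℝ≥0∞ :=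
  if x = ∞ then ∞ else ENNReal.ofReal (Real.logb 2 x.toReal)

/-- Shannon entropy (base 2): `H(p) = Σ_x p(x) log₂ (1/p(x))`. -/
noncomputable def shannon {α : Type*} (p : α → ℝ≥0∞) : ℝ≥0∞ :=
  ∑' x, p x * log2 (p x)⁻¹

/-- Rényi entropy of order `a ∈ [0,∞]` (base 2):
`H_a(p) = (1/(1−a)) log₂ Σ_{x ∈ supp(p)} p(x)^a` for `a ∉ {1,∞}` (for `a > 1` this is
written in the equivalent form `(1/(a−1)) log₂ (Σ_{x ∈ supp(p)} p(x)^a)⁻¹` so that it is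
nonnegative), Shannon entropy for `a = 1`, and `−log₂ max_x p(x)` for `a = ∞`. -/
noncomputable def renyi {α : Type*} (p : α → ℝ≥0∞) (a : ℝ≥0∞) : ℝ≥0∞ :=
  if a = 1 then shannon p
  else if a = ∞ then log2 (⨆ x, p x)⁻¹
  else if a < 1 then log2 (∑' x, if p x = 0 then 0 else p x ^ a.toReal) * (1 - a)⁻¹
  else log2 (∑' x, if p x = 0 then 0 else p x ^ a.toReal)⁻¹ * (a - 1)⁻¹

/-- `q ∈ Γ̃(S)`: `q` (a pmf over `ℕ`, without loss of generality) is an underlying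
distribution of a coupling of `S`, i.e. `q ⊑ p` for every `p ∈ S`. -/
def UnderlyingCoupling {α : Type*} (S : Set (α → ℝ≥0∞)) (q : ℕ → ℝ≥0∞) : Prop :=
  IsPMF q ∧ ∀ p ∈ S, Agg q p

/-- `H*_a(S) = inf_{q ∈ Γ̃(S)} H_a(q)`, the minimum Rényi entropy of couplings of `S`. -/
noncomputable def minRenyi {α : Type*} (S : Set (α → ℝ≥0∞)) (a : ℝ≥0∞) : ℝ≥0∞ :=
  ⨅ (q : ℕ → ℝ≥0∞) (_ : UnderlyingCoupling S q), renyi q a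

/-- Proposition 3(3): `⋀S` is the greatest lower bound of `S` with
respect to majorization: any pmf `q̃` with `q̃ ⪯ p` for all `p ∈ S` satisfies `q̃ ⪯ ⋀S`. -/
theorem glb_is_greatest_lower_bound {α β : Type*} [Countable α] [Countable β]
    (S : Set (α → ℝ≥0∞)) (hS : ∀ p ∈ S, IsPMF p) (hex : GlbExists S)
    (qt : β → ℝ≥0∞) (hqt : IsPMF qt) (h : ∀ p ∈ S, Majorized qt p) :
    Majorized qt (glb S) := by
  intro k
  -- S is nonempty, else infTopk ≡ ⊤ contradicting hex
  have hSne : S.Nonempty := by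
    by_contra hne
    rw [Set.not_nonempty_iff_eq_empty] at hne
    subst hne
    have heq : (fun k => infTopk (∅ : Set (α → ℝ≥0∞)) k) = fun _ => (⊤ : ℝ≥0∞) := by
      funext n; simp [infTopk]
    rw [GlbExists, heq] at hex
    have := tendsto_nhds_unique hex tendsto_const_nhds
    simp at this
  set f : ℕ → ℝ≥0∞ := fun n => infTopk S n with hfdef
  have hmono : Monotone f := by
    intro m n hmn
    refine iInf_mono fun p => iInf_mono fun _ => ?_
    exact iSup_le fun A => iSup_le fun hA =>
      le_iSup₂_of_le A (hA.trans hmn) le_rfl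
  have hf0 : f 0 = 0 := by
    obtain ⟨p, hp⟩ := hSne
    refine le_antisymm (le_trans (iInf₂_le p hp) ?_) zero_le
    refine iSup_le fun A => iSup_le fun hA => ?_
    have : A = ∅ := Finset.card_eq_zero.mp (Nat.le_zero.mp hA)
    simp [this]
  -- step 1: topk qt k ≤ f k
  have h1 : topk qt k ≤ f k := le_iInf₂ fun p hp => h p hp k
  -- telescoping sum
  have h2 : ∀ n : ℕ, ∑ i ∈ Finset.range n, glb S (⟨i + 1, Nat.succ_pos i⟩ : ℕ+) = f n := by
    intro n
    induction n with
    | zero => simpa using hf0.symm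
    | succ n ih =>
      rw [Finset.sum_range_succ, ih]
      show f n + (f (n + 1) - f ((n + 1) - 1)) = f (n + 1)
      simp only [Nat.add_sub_cancel]
      exact add_tsub_cancel_of_le (hmono (Nat.le_succ n))
  -- step 2: f k ≤ topk (glb S) k
  have h3 : f k ≤ topk (glb S) k := by
    set A : Finset ℕ+ :=
      (Finset.range k).image (fun i => (⟨i + 1, Nat.succ_pos i⟩ : ℕ+)) with hA
    have hinj : ∀ x ∈ Finset.range k, ∀ y ∈ Finset.range k,
        (⟨x + 1, Nat.succ_pos x⟩ : ℕ+) = ⟨y + 1, Nat.succ_pos y⟩ → x = y := by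
      intro x _ y _ hxy
      have := congrArg (fun z : ℕ+ => (z : ℕ)) hxy
      simpa using this
    have hsum : ∑ x ∈ A, glb S x = f k := by
      rw [hA]
      exact (Finset.sum_image hinj).trans (h2 k)
    have hcard : A.card ≤ k := by
      calc A.card ≤ (Finset.range k).card := Finset.card_image_le
        _ = k := Finset.card_range k
    calc f k = ∑ x ∈ A, glb S x := hsum.symm
      _ ≤ topk (glb S) k := le_iSup₂_of_le A hcard le_rfl
  exact h1.trans h3

end MEC
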